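/- Let $a < 0$, let $w_1$ be a positive continuous weight on $(a, 0)$ and $w_2$ a positive continuous weight on $(0, 1)$, and let $P$ be a nonzero polynomial of degree at most $n + m$ satisfying $\int_a^0 x^k P(x) w_1(x)\,dx = 0$ for $k = 0, \ldots, n-1$ and $\int_0^1 x^k P(x) w_2(x)\,dx = 0$ for $k = 0, \ldots, m-1$. Then $P$ has at least $n$ sign changes in $(a, 0)$ and at least $m$ sign changes in $(0, 1)$; in particular if $\deg P = n + m$ then $P$ has exactly $n$ simple zeros in $(a, 0)$ and exactly $m$ simple zeros in $(0, 1)$. -/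

import Mathlib

open Set MeasureTheory intervalIntegral Polynomial

lemma ang_factor (P : Polynomial ℝ) (hP : P ≠ 0) :
    ∃ U : Polynomial ℝ, (∀ x, U.eval x ≠ 0) ∧
      ∀ x, P.eval x = U.eval x *
        ∏ r ∈ P.roots.toFinset, (x - r) ^ P.rootMultiplicity r := by
  classical
  obtain ⟨U, hU⟩ := P.prod_multiset_X_sub_C_dvd
  have hT : (P.roots.map fun a => X - C a).prod ≠ 0 := by
    intro h
    rw [h, zero_mul] at hU
    exact hP hU
  have hU0 : U ≠ 0 := by
    intro h
    rw [h, mul_zero] at hU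
    exact hP hU
  have hroots : U.roots = 0 := by
    have := roots_mul (hU ▸ hP)
    rw [← hU, roots_multiset_prod_X_sub_C] at this
    have h2 : P.roots = P.roots + U.roots := this
    have := left_eq_add.mp h2
    exact this
  refine ⟨U, ?_, ?_⟩
  · intro x hx
    have : x ∈ U.roots := by
      rw [mem_roots hU0]; exact hx
    rw [hroots] at this
    simp at this
  · intro x
    have : P.eval x = ((P.roots.map fun a => X - C a).prod).eval x * U.eval x := by
      rw [← eval_mul, ← hU]
    rw [this, mul_comm]
    congr 1
    rw [eval_multiset_prod]
    rw [Multiset.map_map]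
    have h3 : (P.roots.map (eval x ∘ fun a => X - C a)) = P.roots.map fun a => x - a := by
      simp [Function.comp]
    rw [h3, Finset.prod_multiset_map_count]
    congr 1
    ext r
    rw [count_roots]

lemma ang_sign (P : Polynomial ℝ) (hP : P ≠ 0) {x y : ℝ} (hxy : x < y)
    (hx : P.eval x ≠ 0) (hy : P.eval y ≠ 0) :
    ∃ c : ℝ, 0 < c ∧ P.eval x * P.eval y =
      (-1 : ℝ) ^ (∑ r ∈ P.roots.toFinset.filter (fun r => r ∈ Set.Ioo x y),
        P.rootMultiplicity r) * c := by
  classical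
  obtain ⟨U, hUne, hfac⟩ := ang_factor P hP
  have hUpos : 0 < U.eval x * U.eval y := by
    rcases lt_trichotomy (U.eval x * U.eval y) 0 with h | h | h
    · exfalso
      have hc : ContinuousOn (fun t => U.eval t) (Set.uIcc x y) :=
        (Polynomial.continuous U).continuousOn
      have h0 : (0 : ℝ) ∈ Set.uIcc (U.eval x) (U.eval y) := by
        rcases mul_neg_iff.mp h with ⟨h1, h2⟩ | ⟨h1, h2⟩
        · exact Set.mem_uIcc.mpr (Or.inr ⟨h2.le, h1.le⟩)
        · exact Set.mem_uIcc.mpr (Or.inl ⟨h1.le, h2.le⟩)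
      obtain ⟨z, _, hz⟩ := intermediate_value_uIcc hc h0
      exact hUne z hz
    · exfalso
      rcases mul_eq_zero.mp h with h | h
      · exact hUne x h
      · exact hUne y h
    · exact h
  set F := P.roots.toFinset with hF
  set Fi := F.filter (fun r => r ∈ Set.Ioo x y) with hFi
  set Fo := F.filter (fun r => ¬ r ∈ Set.Ioo x y) with hFo
  have hroot_ne : ∀ r ∈ F, r ≠ x ∧ r ≠ y := by
    intro r hr
    have hr' : P.eval r = 0 := by
      have := Multiset.mem_toFinset.mp hr
      exact (mem_roots hP).mp this
    constructor
    · rintro rfl; exact hx hr'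
    · rintro rfl; exact hy hr'
  have key : P.eval x * P.eval y = (U.eval x * U.eval y) *
      ((∏ r ∈ Fi, ((x - r) * (y - r)) ^ P.rootMultiplicity r) *
       (∏ r ∈ Fo, ((x - r) * (y - r)) ^ P.rootMultiplicity r)) := by
    rw [hfac x, hfac y,
      Finset.prod_filter_mul_prod_filter_not F (fun r => r ∈ Set.Ioo x y)
      (fun r => ((x - r) * (y - r)) ^ P.rootMultiplicity r)]
    have : ∀ r ∈ F, ((x - r) * (y - r)) ^ P.rootMultiplicity r
        = (x - r) ^ P.rootMultiplicity r * (y - r) ^ P.rootMultiplicity r :=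
      fun r _ => mul_pow _ _ _
    rw [Finset.prod_congr rfl this, Finset.prod_mul_distrib]
    ring
  have hpo : 0 < ∏ r ∈ Fo, ((x - r) * (y - r)) ^ P.rootMultiplicity r := by
    apply Finset.prod_pos
    intro r hr
    obtain ⟨hrF, hrI⟩ := Finset.mem_filter.mp hr
    obtain ⟨hne1, hne2⟩ := hroot_ne r hrF
    have : 0 < (x - r) * (y - r) := by
      rcases lt_or_gt_of_ne hne1 with h | h
      · exact mul_pos (by linarith) (by linarith)
      · have hry : y < r := by
          by_contra hc
          push_neg at hc
          exact hrI ⟨h, lt_of_le_of_ne hc hne2⟩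
        exact mul_pos_of_neg_of_neg (by linarith) (by linarith)
    positivity
  have hin : ∀ r ∈ Fi, ((x - r) * (y - r)) ^ P.rootMultiplicity r
      = (-1 : ℝ) ^ P.rootMultiplicity r * (-((x - r) * (y - r))) ^ P.rootMultiplicity r := by
    intro r _
    rw [← mul_pow]
    ring_nf
  have hpi : 0 < ∏ r ∈ Fi, (-((x - r) * (y - r))) ^ P.rootMultiplicity r := by
    apply Finset.prod_pos
    intro r hr
    obtain ⟨hrF, hrI⟩ := Finset.mem_filter.mp hr
    obtain ⟨h1, h2⟩ := hrI
    have : (x - r) * (y - r) < 0 := mul_neg_of_neg_of_pos (by linarith) (by linarith)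
    have hb : 0 < -((x - r) * (y - r)) := by linarith
    positivity
  refine ⟨(U.eval x * U.eval y) *
      ((∏ r ∈ Fi, (-((x - r) * (y - r))) ^ P.rootMultiplicity r) *
       (∏ r ∈ Fo, ((x - r) * (y - r)) ^ P.rootMultiplicity r)), by positivity, ?_⟩
  rw [key, Finset.prod_congr rfl hin, Finset.prod_mul_distrib,
    Finset.prod_pow_eq_pow_sum]
  ring

lemma ang_intpos {α β : ℝ} (hab : α < β) (f : ℝ → ℝ)
    (hcont : ContinuousOn f (Set.Ioo α β))
    (hnn : ∀ x ∈ Set.Ioo α β, 0 ≤ f x)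
    {x₀ : ℝ} (hx₀ : x₀ ∈ Set.Ioo α β) (hfx₀ : 0 < f x₀)
    (hint : IntervalIntegrable f volume α β) :
    0 < ∫ x in α..β, f x := by
  have hca : ContinuousAt f x₀ := hcont.continuousAt (isOpen_Ioo.mem_nhds hx₀)
  have h2 : ∀ᶠ z in nhds x₀, f x₀ / 2 < f z ∧ z ∈ Set.Ioo α β :=
    (hca.eventually (eventually_gt_nhds (by linarith))).and (isOpen_Ioo.eventually_mem hx₀)
  obtain ⟨δ, hδ, hball⟩ := Metric.eventually_nhds_iff_ball.mp h2
  set c := x₀ - δ / 2 with hc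
  set d := x₀ + δ / 2 with hd
  have hmem : ∀ z ∈ Set.Icc c d, f x₀ / 2 < f z ∧ z ∈ Set.Ioo α β := by
    intro z hz
    apply hball
    rw [Metric.mem_ball, Real.dist_eq, abs_sub_lt_iff]
    obtain ⟨h1, h2⟩ := hz
    constructor <;> [skip; skip] <;> simp only [hc, hd] at h1 h2 <;> linarith
  have hcIoo := (hmem c ⟨le_refl c, by simp [hc, hd]; linarith⟩).2
  have hdIoo := (hmem d ⟨by simp [hc, hd]; linarith, le_refl d⟩).2
  have hcd : c < d := by simp [hc, hd]; linarith
  have hae : 0 ≤ᵐ[volume.restrict (Set.Ioc α β)] f := by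
    rw [← Measure.restrict_congr_set Ioo_ae_eq_Ioc]
    exact (ae_restrict_iff' measurableSet_Ioo).2 (Filter.Eventually.of_forall hnn)
  have hpos : 0 < ∫ x in c..d, f x := by
    apply intervalIntegral_pos_of_pos_on
    · exact hint.mono_set (Set.uIcc_subset_uIcc
        (by rw [Set.uIcc_of_le hab.le]; exact ⟨hcIoo.1.le, hcIoo.2.le⟩)
        (by rw [Set.uIcc_of_le hab.le]; exact ⟨hdIoo.1.le, hdIoo.2.le⟩))
    · intro z hz
      have := (hmem z ⟨hz.1.le, hz.2.le⟩).1
      linarith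
    · exact hcd
  calc (0:ℝ) < ∫ x in c..d, f x := hpos
    _ ≤ ∫ x in α..β, f x := integral_mono_interval hcIoo.1.le hcd.le hdIoo.2.le hae hint

/-- If all odd-multiplicity roots of a nonzero polynomial `g` in `(α,β)` are... none,
then `g` has weakly constant sign on `(α,β)`. -/
lemma ang_const_sign {α β : ℝ} {g : Polynomial ℝ} (hg : g ≠ 0)
    (heven : ∀ r ∈ Set.Ioo α β, Even (g.rootMultiplicity r))
    {x y : ℝ} (hx : x ∈ Set.Ioo α β) (hy : y ∈ Set.Ioo α β) :
    0 ≤ g.eval x * g.eval y := by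
  classical
  by_cases hgx : g.eval x = 0
  · simp [hgx]
  by_cases hgy : g.eval y = 0
  · simp [hgy]
  have main : ∀ u v : ℝ, u ∈ Set.Ioo α β → v ∈ Set.Ioo α β → u < v →
      g.eval u ≠ 0 → g.eval v ≠ 0 → 0 ≤ g.eval u * g.eval v := by
    intro u v hu hv huv hgu hgv
    obtain ⟨c, hc, heq⟩ := ang_sign g hg huv hgu hgv
    have hevsum : Even (∑ r ∈ g.roots.toFinset.filter (fun r => r ∈ Set.Ioo u v),
        g.rootMultiplicity r) := by
      apply Finset.even_sum
      intro r hr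
      obtain ⟨_, hrI⟩ := Finset.mem_filter.mp hr
      exact heven r ⟨lt_trans hu.1 hrI.1, lt_trans hrI.2 hv.2⟩
    rw [heq, hevsum.neg_one_pow, one_mul]
    exact hc.le
  rcases lt_trichotomy x y with h | h | h
  · exact main x y hx hy h hgx hgy
  · subst h; exact mul_self_nonneg _
  · rw [mul_comm]; exact main y x hy hx h hgy hgx

lemma ang_card {α β : ℝ} (hab : α < β) {n : ℕ} {w : ℝ → ℝ}
    (hw_cont : ContinuousOn w (Set.Ioo α β))
    (hw_pos : ∀ x ∈ Set.Ioo α β, 0 < w x)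
    (hw_int : IntervalIntegrable w volume α β)
    {P : Polynomial ℝ} (hP : P ≠ 0)
    (horth : ∀ k < n, ∫ x in α..β, x ^ k * P.eval x * w x = 0) :
    n ≤ (P.roots.toFinset.filter
      (fun r => r ∈ Set.Ioo α β ∧ Odd (P.rootMultiplicity r))).card := by
  classical
  by_contra hcard
  push_neg at hcard
  set S := P.roots.toFinset.filter
      (fun r => r ∈ Set.Ioo α β ∧ Odd (P.rootMultiplicity r)) with hS
  set Q : Polynomial ℝ := ∏ r ∈ S, (X - C r) with hQdef
  have hQmonic : Q.Monic := monic_prod_of_monic _ _ (fun r _ => monic_X_sub_C r)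
  have hQ0 : Q ≠ 0 := hQmonic.ne_zero
  have hQdeg : Q.natDegree = S.card := by
    rw [hQdef, natDegree_prod _ _ (fun r _ => X_sub_C_ne_zero r)]
    simp [natDegree_X_sub_C]
  set g : Polynomial ℝ := Q * P with hgdef
  have hg0 : g ≠ 0 := mul_ne_zero hQ0 hP
  -- multiplicity of Q
  have hQmult : ∀ r : ℝ, Q.rootMultiplicity r = if r ∈ S then 1 else 0 := by
    intro r
    rw [← count_roots, hQdef, roots_prod_X_sub_C]
    split_ifs with h
    · exact Multiset.count_eq_one_of_mem S.nodup h
    · exact Multiset.count_eq_zero.mpr (fun hc => h hc)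
  -- all multiplicities of g in (α,β) are even
  have heven : ∀ r ∈ Set.Ioo α β, Even (g.rootMultiplicity r) := by
    intro r hr
    by_cases hroot : g.IsRoot r
    · rw [hgdef, rootMultiplicity_mul (hgdef ▸ hg0), hQmult r]
      by_cases hrS : r ∈ S
      · obtain ⟨-, -, hodd⟩ := Finset.mem_filter.mp hrS
        rw [if_pos hrS]
        obtain ⟨k, hk⟩ := hodd
        exact ⟨k + 1, by omega⟩
      · rw [if_neg hrS, zero_add]
        by_contra hodd
        rw [Nat.not_even_iff_odd] at hodd
        have hPr : P.IsRoot r := by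
          by_contra hc
          rw [rootMultiplicity_eq_zero hc] at hodd
          simp at hodd
        exact hrS (Finset.mem_filter.mpr ⟨Multiset.mem_toFinset.mpr
          ((mem_roots hP).mpr hPr), hr, hodd⟩)
    · rw [rootMultiplicity_eq_zero hroot]
      exact Even.zero
  -- a point where g is nonzero
  obtain ⟨x₁, hx₁⟩ := ((Set.Ioo_infinite hab).diff (finite_setOf_isRoot hg0)).nonempty
  obtain ⟨hx₁I, hx₁root⟩ := hx₁
  have hgx₁ : g.eval x₁ ≠ 0 := fun h => hx₁root h
  -- sign
  obtain ⟨ε, hε1, hεpos⟩ : ∃ ε : ℝ, ε * ε = 1 ∧ 0 < ε * g.eval x₁ := by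
    rcases lt_or_gt_of_ne hgx₁ with h | h
    · exact ⟨-1, by norm_num, by linarith⟩
    · exact ⟨1, by norm_num, by linarith⟩
  -- the integral of ε * g * w vanishes
  have hint_k : ∀ k : ℕ, IntervalIntegrable (fun x => x ^ k * P.eval x * w x) volume α β := by
    intro k
    have : ContinuousOn (fun x : ℝ => x ^ k * P.eval x) (Set.uIcc α β) :=
      ((continuous_pow k).mul P.continuous).continuousOn
    simpa [mul_assoc] using hw_int.continuousOn_mul this
  have hIzero : (∫ x in α..β, Q.eval x * (P.eval x * w x)) = 0 := by
    have hrw : ∀ x : ℝ, Q.eval x * (P.eval x * w x) =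
        ∑ k ∈ Finset.range (Q.natDegree + 1), Q.coeff k * (x ^ k * P.eval x * w x) := by
      intro x
      rw [eval_eq_sum_range (p := Q) x, Finset.sum_mul]
      apply Finset.sum_congr rfl
      intro k _
      ring
    rw [intervalIntegral.integral_congr (fun x _ => hrw x)]
    rw [intervalIntegral.integral_finset_sum
      (fun k _ => (hint_k k).const_mul (Q.coeff k))]
    apply Finset.sum_eq_zero
    intro k hk
    rw [intervalIntegral.integral_const_mul, horth k ?_, mul_zero]
    have := Finset.mem_range.mp hk
    omega
  -- positivity of the integral
  have hgw_int : IntervalIntegrable (fun x => ε * (g.eval x * w x)) volume α β := by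
    have : ContinuousOn (fun x : ℝ => ε * g.eval x) (Set.uIcc α β) :=
      (continuous_const.mul g.continuous).continuousOn
    simpa [mul_assoc] using hw_int.continuousOn_mul this
  have hpos : 0 < ∫ x in α..β, ε * (g.eval x * w x) := by
    apply ang_intpos hab _ ?_ ?_ hx₁I ?_ hgw_int
    · have : ContinuousOn (fun x => ε * eval x g * w x) (Set.Ioo α β) :=
        (continuous_const.mul g.continuous).continuousOn.mul hw_cont
      simpa [mul_assoc] using this
    · intro y hy
      have h1 : 0 ≤ g.eval x₁ * g.eval y := ang_const_sign hg0 heven hx₁I hy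
      have h2 : 0 ≤ ε * g.eval y := by
        nlinarith
      have h3 := (hw_pos y hy).le
      calc (0:ℝ) ≤ (ε * g.eval y) * w y := mul_nonneg h2 h3
        _ = ε * (g.eval y * w y) := by ring
    · exact mul_pos hεpos (hw_pos x₁ hx₁I) |>.trans_eq (by ring)
  rw [intervalIntegral.integral_const_mul] at hpos
  have : (∫ x in α..β, g.eval x * w x) = 0 := by
    rw [← hIzero]
    apply intervalIntegral.integral_congr
    intro x _
    show eval x (Q * P) * w x = eval x Q * (eval x P * w x)
    rw [eval_mul]
    ring
  rw [this, mul_zero] at hpos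
  exact lt_irrefl 0 hpos

lemma ang_points {α β : ℝ} (hab : α < β) {P : Polynomial ℝ} (hP : P ≠ 0) {n : ℕ}
    (hcard : n ≤ (P.roots.toFinset.filter
      (fun r => r ∈ Set.Ioo α β ∧ Odd (P.rootMultiplicity r))).card) :
    ∃ t : Fin (n + 1) → ℝ, StrictMono t ∧ (∀ i, t i ∈ Set.Ioo α β) ∧
      ∀ i : Fin n, P.eval (t i.castSucc) * P.eval (t i.succ) < 0 := by
  classical
  set S := P.roots.toFinset.filter
      (fun r => r ∈ Set.Ioo α β ∧ Odd (P.rootMultiplicity r)) with hSdef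
  set s := S.card with hs
  have hSprop : ∀ r ∈ S, P.IsRoot r ∧ r ∈ Set.Ioo α β ∧ Odd (P.rootMultiplicity r) := by
    intro r hr
    obtain ⟨h1, h2, h3⟩ := Finset.mem_filter.mp hr
    exact ⟨(mem_roots hP).mp (Multiset.mem_toFinset.mp h1), h2, h3⟩
  set e := S.orderIsoOfFin hs.symm with he
  set u : ℕ → ℝ := fun k => if h : k < s then (e ⟨k, h⟩ : ℝ) else β with hu
  have hu_pos : ∀ k (h : k < s), u k = (e ⟨k, h⟩ : ℝ) := by
    intro k h; simp only [hu, dif_pos h]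
  have hu_neg : ∀ k, ¬ k < s → u k = β := by
    intro k h; simp only [hu, dif_neg h]
  have hu_mem : ∀ k, k < s → u k ∈ Set.Ioo α β := by
    intro k h
    rw [hu_pos k h]
    exact (hSprop _ (e ⟨k, h⟩).prop).2.1
  have hu_le : ∀ k, u k ≤ β := by
    intro k
    by_cases h : k < s
    · exact (hu_mem k h).2.le
    · exact (hu_neg k h).le
  have hu_mono : ∀ j k, j < k → k ≤ s → u j < u k := by
    intro j k hjk hks
    have hj : j < s := lt_of_lt_of_le hjk hks
    rcases lt_or_eq_of_le hks with h | h
    · rw [hu_pos j hj, hu_pos k h]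
      exact Subtype.coe_lt_coe.mpr (e.strictMono hjk)
    · subst h
      rw [hu_neg s (lt_irrefl s)]
      exact (hu_mem j hj).2
  -- lower bounds
  set lo : Fin (n + 1) → ℝ := fun i => if (i : ℕ) = 0 then α else u ((i : ℕ) - 1) with hlo
  set hi : Fin (n + 1) → ℝ := fun i => u (i : ℕ) with hhi
  have hlo_ge : ∀ i, α ≤ lo i := by
    intro i
    rw [hlo]
    by_cases h : (i : ℕ) = 0
    · simp [h]
    · simp only [if_neg h]
      have : (i : ℕ) - 1 < s := by omega
      exact (hu_mem _ this).1.le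
  have hlohi : ∀ i, lo i < hi i := by
    intro i
    rw [hlo, hhi]
    by_cases h : (i : ℕ) = 0
    · simp only [if_pos h, h]
      by_cases h0 : 0 < s
      · exact (hu_mem 0 h0).1
      · rw [hu_neg 0 h0]; exact hab
    · simp only [if_neg h]
      have hi_le : (i : ℕ) ≤ s := le_trans (Nat.lt_succ_iff.mp i.isLt) hcard
      exact hu_mono _ _ (by omega) hi_le
  -- choose the points
  have hex : ∀ i : Fin (n + 1), ∃ x, x ∈ Set.Ioo (lo i) (hi i) ∧ ¬ P.IsRoot x := by
    intro i
    obtain ⟨x, hx1, hx2⟩ :=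
      ((Set.Ioo_infinite (hlohi i)).diff (finite_setOf_isRoot hP)).nonempty
    exact ⟨x, hx1, hx2⟩
  choose t ht1 ht2 using hex
  have htIoo : ∀ i, t i ∈ Set.Ioo α β := by
    intro i
    constructor
    · exact lt_of_le_of_lt (hlo_ge i) (ht1 i).1
    · exact lt_of_lt_of_le (ht1 i).2 (by rw [hhi]; exact hu_le _)
  have hstep : ∀ i : Fin n, t i.castSucc < u (i : ℕ) ∧ u (i : ℕ) < t i.succ := by
    intro i
    constructor
    · have := (ht1 i.castSucc).2
      simp only [hhi, Fin.coe_castSucc] at this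
      exact this
    · have := (ht1 i.succ).1
      simp only [hlo, Fin.val_succ, if_neg (Nat.succ_ne_zero _), Nat.succ_sub_one] at this
      exact this
  refine ⟨t, ?_, htIoo, ?_⟩
  · rw [Fin.strictMono_iff_lt_succ]
    intro i
    exact lt_trans (hstep i).1 (hstep i).2
  · intro i
    have his : (i : ℕ) < s := lt_of_lt_of_le i.isLt hcard
    set r₀ : ℝ := (e ⟨(i : ℕ), his⟩ : ℝ) with hr₀
    have hr₀S : r₀ ∈ S := (e ⟨(i : ℕ), his⟩).prop
    obtain ⟨hroot₀, hIoo₀, hodd₀⟩ := hSprop _ hr₀S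
    have hur : u (i : ℕ) = r₀ := hu_pos _ his
    set x := t i.castSucc with hxdef
    set y := t i.succ with hydef
    have hxy : x < y := lt_trans (hstep i).1 (hstep i).2
    have hxr : x < r₀ := hur ▸ (hstep i).1
    have hry : r₀ < y := hur ▸ (hstep i).2
    have hx0 : P.eval x ≠ 0 := ht2 i.castSucc
    have hy0 : P.eval y ≠ 0 := ht2 i.succ
    obtain ⟨c, hc, heq⟩ := ang_sign P hP hxy hx0 hy0
    set F := P.roots.toFinset.filter (fun r => r ∈ Set.Ioo x y) with hF
    have hr₀F : r₀ ∈ F := Finset.mem_filter.mpr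
      ⟨Multiset.mem_toFinset.mpr ((mem_roots hP).mpr hroot₀), hxr, hry⟩
    -- all other roots in (x,y) have even multiplicity
    have hevenF : ∀ r ∈ F.erase r₀, Even (P.rootMultiplicity r) := by
      intro r hr
      obtain ⟨hrne, hrF⟩ := Finset.mem_erase.mp hr
      obtain ⟨hrroots, hrxy⟩ := Finset.mem_filter.mp hrF
      by_contra hev
      rw [Nat.not_even_iff_odd] at hev
      have hrIoo : r ∈ Set.Ioo α β :=
        ⟨lt_trans (htIoo i.castSucc).1 hrxy.1, lt_trans hrxy.2 (htIoo i.succ).2⟩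
      have hrS : r ∈ S := Finset.mem_filter.mpr ⟨hrroots, hrIoo, hev⟩
      set j : Fin s := e.symm ⟨r, hrS⟩ with hj
      have hej : (e j : ℝ) = r := by rw [hj]; simp
      have hjne : (j : ℕ) ≠ (i : ℕ) := by
        intro hcon
        apply hrne
        rw [← hej, hr₀]
        congr 1
        exact congrArg e (Fin.ext hcon)
      rcases lt_or_gt_of_ne hjne with hlt | hgt
      · -- r = e j ≤ u (i-1) ≤ lo (castSucc i) < x, contradiction with x < r
        have hi1 : (i : ℕ) ≠ 0 := by omega
        have hj_le : (j : ℕ) ≤ (i : ℕ) - 1 := by omega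
        have hle : (e j : ℝ) ≤ u ((i : ℕ) - 1) := by
          rw [hu_pos _ (by omega : (i : ℕ) - 1 < s)]
          exact Subtype.coe_le_coe.mpr (e.monotone (by
            exact Fin.mk_le_mk.mpr hj_le |>.trans_eq rfl))
        have hlox : u ((i : ℕ) - 1) < x := by
          have := (ht1 i.castSucc).1
          simp only [hlo, Fin.coe_castSucc, if_neg hi1] at this
          exact this
        have : r < x := lt_of_le_of_lt (hej ▸ hle) hlox
        exact absurd hrxy.1 (not_lt.mpr this.le)
      · -- r = e j ≥ u (i+1) ≥ hi (succ i) > y, contradiction with r < y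
        have hj1 : (i : ℕ) + 1 ≤ (j : ℕ) := hgt
        have hi1s : (i : ℕ) + 1 < s := lt_of_le_of_lt hj1 j.isLt
        have hge : u ((i : ℕ) + 1) ≤ (e j : ℝ) := by
          rw [hu_pos _ hi1s]
          exact Subtype.coe_le_coe.mpr (e.monotone (Fin.mk_le_mk.mpr hj1 |>.trans_eq (by
            apply Fin.ext; rfl)))
        have hyhi : y < u ((i : ℕ) + 1) := by
          have := (ht1 i.succ).2
          simp only [hhi, Fin.val_succ] at this
          exact this
        have : y < r := lt_of_lt_of_le hyhi (hej ▸ hge)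
        exact absurd hrxy.2 (not_lt.mpr this.le)
    have hoddsum : Odd (∑ r ∈ F, P.rootMultiplicity r) := by
      rw [← Finset.add_sum_erase F _ hr₀F]
      have : Even (∑ r ∈ F.erase r₀, P.rootMultiplicity r) :=
        Finset.even_sum _ hevenF
      exact hodd₀.add_even this
    rw [heq, hoddsum.neg_one_pow]
    linarith

lemma ang_deriv {P : Polynomial ℝ} (hP : P ≠ 0) {r : ℝ} (h1 : P.rootMultiplicity r = 1) :
    (Polynomial.derivative P).eval r ≠ 0 := by
  obtain ⟨q, hq, hnd⟩ := P.exists_eq_pow_rootMultiplicity_mul_and_not_dvd hP r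
  rw [h1, pow_one] at hq
  have hqr : q.eval r ≠ 0 := fun h => hnd (dvd_iff_isRoot.mpr h)
  rw [hq]
  simpa [derivative_mul] using hqr

/-- Angelesco localization: a type II multiple orthogonal polynomial for two
weights on `(a,0)` and `(0,1)` has at least `n` sign changes in `(a,0)` and at
least `m` sign changes in `(0,1)`; if its degree is exactly `n + m`, it has
exactly `n` simple zeros in `(a,0)` and exactly `m` simple zeros in `(0,1)`. -/
theorem angelesco_localization
    (a : ℝ) (ha : a < 0) (n m : ℕ) (w₁ w₂ : ℝ → ℝ)
    (hw₁_cont : ContinuousOn w₁ (Set.Ioo a 0)) (hw₁_pos : ∀ x ∈ Set.Ioo a 0, 0 < w₁ x)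
    (hw₂_cont : ContinuousOn w₂ (Set.Ioo (0 : ℝ) 1)) (hw₂_pos : ∀ x ∈ Set.Ioo (0 : ℝ) 1, 0 < w₂ x)
    (hw₁_int : IntervalIntegrable w₁ MeasureTheory.volume a 0)
    (hw₂_int : IntervalIntegrable w₂ MeasureTheory.volume 0 1)
    (P : Polynomial ℝ) (hP : P ≠ 0) (hPdeg : P.natDegree ≤ n + m)
    (horth₁ : ∀ k < n, ∫ x in a..0, x ^ k * P.eval x * w₁ x = 0)
    (horth₂ : ∀ k < m, ∫ x in (0 : ℝ)..1, x ^ k * P.eval x * w₂ x = 0) :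
    (∃ t : Fin (n + 1) → ℝ, StrictMono t ∧ (∀ i, t i ∈ Set.Ioo a 0) ∧
      ∀ i : Fin n, P.eval (t i.castSucc) * P.eval (t i.succ) < 0) ∧
    (∃ t : Fin (m + 1) → ℝ, StrictMono t ∧ (∀ i, t i ∈ Set.Ioo (0 : ℝ) 1) ∧
      ∀ i : Fin m, P.eval (t i.castSucc) * P.eval (t i.succ) < 0) ∧
    (P.natDegree = n + m →
      (∃ S : Finset ℝ, S.card = n ∧ (↑S : Set ℝ) ⊆ Set.Ioo a 0 ∧
        (∀ x ∈ Set.Ioo a 0, P.eval x = 0 ↔ x ∈ S) ∧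
        ∀ x ∈ S, (Polynomial.derivative P).eval x ≠ 0) ∧
      (∃ S : Finset ℝ, S.card = m ∧ (↑S : Set ℝ) ⊆ Set.Ioo (0 : ℝ) 1 ∧
        (∀ x ∈ Set.Ioo (0 : ℝ) 1, P.eval x = 0 ↔ x ∈ S) ∧
        ∀ x ∈ S, (Polynomial.derivative P).eval x ≠ 0)) := by
  classical
  have h01 : (0 : ℝ) < 1 := one_pos
  set S₁ := P.roots.toFinset.filter
    (fun r => r ∈ Set.Ioo a 0 ∧ Odd (P.rootMultiplicity r)) with hS₁
  set S₂ := P.roots.toFinset.filter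
    (fun r => r ∈ Set.Ioo (0 : ℝ) 1 ∧ Odd (P.rootMultiplicity r)) with hS₂
  have hc₁ : n ≤ S₁.card := ang_card ha hw₁_cont hw₁_pos hw₁_int hP horth₁
  have hc₂ : m ≤ S₂.card := ang_card h01 hw₂_cont hw₂_pos hw₂_int hP horth₂
  refine ⟨ang_points ha hP hc₁, ang_points h01 hP hc₂, ?_⟩
  intro hdeg
  have hsub : S₁ ∪ S₂ ⊆ P.roots.toFinset :=
    Finset.union_subset (Finset.filter_subset _ _) (Finset.filter_subset _ _)
  have hdisj : Disjoint S₁ S₂ := by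
    rw [Finset.disjoint_left]
    intro r h1 h2
    have hr1 := (Finset.mem_filter.mp h1).2.1
    have hr2 := (Finset.mem_filter.mp h2).2.1
    exact absurd hr2.1 (not_lt.mpr hr1.2.le)
  have hone : ∀ r ∈ S₁ ∪ S₂, 1 ≤ P.rootMultiplicity r := by
    intro r hr
    rcases Finset.mem_union.mp hr with h | h
    · exact (Finset.mem_filter.mp h).2.2.pos
    · exact (Finset.mem_filter.mp h).2.2.pos
  have htot : ∑ r ∈ P.roots.toFinset, P.rootMultiplicity r = Multiset.card P.roots := by
    rw [← Multiset.toFinset_sum_count_eq]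
    exact Finset.sum_congr rfl (fun r _ => (count_roots P).symm ▸ rfl)
  have hchain1 : S₁.card + S₂.card ≤ ∑ r ∈ S₁ ∪ S₂, P.rootMultiplicity r := by
    rw [← Finset.card_union_of_disjoint hdisj, Finset.card_eq_sum_ones]
    exact Finset.sum_le_sum hone
  have hchain2 : ∑ r ∈ S₁ ∪ S₂, P.rootMultiplicity r
      ≤ ∑ r ∈ P.roots.toFinset, P.rootMultiplicity r :=
    Finset.sum_le_sum_of_subset hsub
  have hchain3 : (Multiset.card P.roots) ≤ n + m := hdeg ▸ P.card_roots'
  have hnm : n + m ≤ S₁.card + S₂.card := add_le_add hc₁ hc₂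
  have heq1 : S₁.card = n ∧ S₂.card = m := by
    constructor <;> omega
  have hsum_eq : ∑ r ∈ S₁ ∪ S₂, P.rootMultiplicity r = (S₁ ∪ S₂).card := by
    rw [Finset.card_union_of_disjoint hdisj]
    omega
  have hmult1 : ∀ r ∈ S₁ ∪ S₂, P.rootMultiplicity r = 1 := by
    intro r hr
    by_contra hne
    have h2 : 2 ≤ P.rootMultiplicity r := by
      have := hone r hr
      omega
    have herase : (S₁ ∪ S₂).card - 1 ≤ ∑ x ∈ (S₁ ∪ S₂).erase r, P.rootMultiplicity x := by
      rw [← Finset.card_erase_of_mem hr, Finset.card_eq_sum_ones]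
      exact Finset.sum_le_sum (fun x hx => hone x (Finset.mem_of_mem_erase hx))
    have hsplit : ∑ x ∈ S₁ ∪ S₂, P.rootMultiplicity x
        = P.rootMultiplicity r + ∑ x ∈ (S₁ ∪ S₂).erase r, P.rootMultiplicity x :=
      (Finset.add_sum_erase _ _ hr).symm
    have hcardpos : 1 ≤ (S₁ ∪ S₂).card := Finset.card_pos.mpr ⟨r, hr⟩
    omega
  have hcover : P.roots.toFinset ⊆ S₁ ∪ S₂ := by
    by_contra hc
    obtain ⟨r, hr1, hr2⟩ := Finset.not_subset.mp hc
    have hsd : r ∈ P.roots.toFinset \ (S₁ ∪ S₂) := Finset.mem_sdiff.mpr ⟨hr1, hr2⟩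
    have hsdiff : ∑ x ∈ P.roots.toFinset \ (S₁ ∪ S₂), P.rootMultiplicity x
        + ∑ x ∈ S₁ ∪ S₂, P.rootMultiplicity x
        = ∑ x ∈ P.roots.toFinset, P.rootMultiplicity x := Finset.sum_sdiff hsub
    have hzero : ∑ x ∈ P.roots.toFinset \ (S₁ ∪ S₂), P.rootMultiplicity x = 0 := by omega
    have := Finset.sum_eq_zero_iff.mp hzero r hsd
    have hroot : P.IsRoot r := (mem_roots hP).mp (Multiset.mem_toFinset.mp hr1)
    rw [← count_roots] at this
    exact absurd (Multiset.count_eq_zero.mp this) (not_not.mpr (Multiset.mem_toFinset.mp hr1))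
  constructor
  · refine ⟨S₁, heq1.1, ?_, ?_, ?_⟩
    · intro x hx
      exact (Finset.mem_filter.mp hx).2.1
    · intro x hx
      constructor
      · intro hev
        have hxt : x ∈ P.roots.toFinset := Multiset.mem_toFinset.mpr ((mem_roots hP).mpr hev)
        rcases Finset.mem_union.mp (hcover hxt) with h | h
        · exact h
        · have := (Finset.mem_filter.mp h).2.1
          exact absurd this.1 (not_lt.mpr hx.2.le)
      · intro hxS
        exact (mem_roots hP).mp (Multiset.mem_toFinset.mp (Finset.mem_filter.mp hxS).1)
    · intro x hx
      exact ang_deriv hP (hmult1 x (Finset.mem_union_left _ hx))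
  · refine ⟨S₂, heq1.2, ?_, ?_, ?_⟩
    · intro x hx
      exact (Finset.mem_filter.mp hx).2.1
    · intro x hx
      constructor
      · intro hev
        have hxt : x ∈ P.roots.toFinset := Multiset.mem_toFinset.mpr ((mem_roots hP).mpr hev)
        rcases Finset.mem_union.mp (hcover hxt) with h | h
        · have := (Finset.mem_filter.mp h).2.1
          exact absurd hx.1 (not_lt.mpr this.2.le)
        · exact h
      · intro hxS
        exact (mem_roots hP).mp (Multiset.mem_toFinset.mp (Finset.mem_filter.mp hxS).1)
    · intro x hx
      exact ang_deriv hP (hmult1 x (Finset.mem_union_right _ hx))
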